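/- Let u ∈ C, v ∈ R with v > 0, and suppose the Kummer confluent hypergeometric function satisfies ₁F₁(u, v, z) = 0 for some purely imaginary z ≠ 0. Then Re(u) = v/2. -/

import Mathlib

/-- The Kummer confluent hypergeometric function
`₁F₁(a, b, z) = Σ_{k≥0} (a)_k / ((b)_k k!) · z^k`,
where `(a)_k` is the Pochhammer symbol (rising factorial). -/
noncomputable def kummer (a b z : ℂ) : ℂ :=
  ∑' k : ℕ,
    ((ascPochhammer ℂ k).eval a / ((ascPochhammer ℂ k).eval b * (k.factorial : ℂ))) * z ^ k


open Complex Filter Topology Set intervalIntegral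

set_option linter.unusedSectionVars false

namespace KummerProof


/-- Ring hom commutes with ascPochhammer eval. -/
lemma ascPochhammer_eval_hom {R S : Type*} [CommSemiring R] [CommSemiring S]
    (f : R →+* S) (n : ℕ) (x : R) :
    f ((ascPochhammer R n).eval x) = (ascPochhammer S n).eval (f x) := by
  induction n with
  | zero => simp
  | succ n ih =>
    rw [ascPochhammer_succ_eval, ascPochhammer_succ_eval, map_mul, ih, map_add, map_natCast]

lemma norm_ascPochhammer_le (n : ℕ) (x : ℂ) :
    ‖(ascPochhammer ℂ n).eval x‖ ≤ (ascPochhammer ℝ n).eval (‖x‖ + 1) := by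
  induction n with
  | zero => simp
  | succ n ih =>
    rw [ascPochhammer_succ_eval, ascPochhammer_succ_eval, norm_mul]
    have h1 : ‖x + (n:ℂ)‖ ≤ ‖x‖ + 1 + n := by
      calc ‖x + (n:ℂ)‖ ≤ ‖x‖ + ‖(n:ℂ)‖ := norm_add_le _ _
      _ ≤ ‖x‖ + 1 + n := by simp only [Complex.norm_natCast]; linarith
    exact mul_le_mul ih h1 (norm_nonneg _)
      (le_of_lt (ascPochhammer_pos n _ (by positivity)))



/-- Summability of the comparison series. -/
lemma summable_ratio (a b R : ℝ) (ha : 0 < a) (hb : 0 < b) (hR : 0 < R) :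
    Summable (fun n : ℕ =>
      (ascPochhammer ℝ n).eval a / ((ascPochhammer ℝ n).eval b * (n.factorial : ℝ)) * R ^ n) := by
  set d : ℕ → ℝ := fun n =>
      (ascPochhammer ℝ n).eval a / ((ascPochhammer ℝ n).eval b * (n.factorial : ℝ)) * R ^ n with hd
  have hdpos : ∀ n, 0 < d n := by
    intro n
    have h1 := ascPochhammer_pos n a ha
    have h2 := ascPochhammer_pos n b hb
    have h3 : (0:ℝ) < n.factorial := by exact_mod_cast n.factorial_pos
    positivity
  apply summable_of_ratio_test_tendsto_lt_one (l := 0) one_pos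
  · exact Eventually.of_forall fun n => (hdpos n).ne'
  · have key : ∀ n : ℕ, ‖d (n+1)‖ / ‖d n‖ = R * ((a + n) / (b + n)) * ((n:ℝ)+1)⁻¹ := by
      intro n
      have h1 := ascPochhammer_pos n a ha
      have h2 := ascPochhammer_pos n b hb
      have h3 : (0:ℝ) < n.factorial := by exact_mod_cast n.factorial_pos
      have hbn : (0:ℝ) < b + n := by positivity
      have han : (0:ℝ) < a + n := by positivity
      rw [Real.norm_eq_abs, Real.norm_eq_abs, abs_of_pos (hdpos _), abs_of_pos (hdpos _), hd]
      simp only [ascPochhammer_succ_eval, Nat.factorial_succ, Nat.cast_mul, Nat.cast_add,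
        Nat.cast_one, pow_succ]
      field_simp
    rw [show (0:ℝ) = R * 1 * 0 by ring]
    refine Tendsto.congr (fun n => (key n).symm) ?_
    refine Tendsto.mul (Tendsto.mul tendsto_const_nhds ?_) ?_
    · have h0 : Tendsto (fun n : ℕ => (b + (n:ℝ))⁻¹) atTop (𝓝 0) := by
        apply Tendsto.inv_tendsto_atTop
        exact tendsto_atTop_add_const_left _ b tendsto_natCast_atTop_atTop
      have : Tendsto (fun n : ℕ => 1 + (a - b) * (b + (n:ℝ))⁻¹) atTop (𝓝 1) := by
        have := (h0.const_mul (a - b)).const_add 1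
        simpa using this
      refine this.congr (fun n => ?_)
      have hbn : (0:ℝ) < b + n := by positivity
      field_simp
      ring
    · apply Tendsto.inv_tendsto_atTop
      exact tendsto_atTop_add_const_right _ 1 tendsto_natCast_atTop_atTop

/-- A coefficient sequence whose series has infinite radius of convergence. -/
def Good (c : ℕ → ℂ) : Prop := ∀ R : ℝ, 0 < R → Summable (fun n => ‖c n‖ * R ^ n)

lemma Good.summable_n {c : ℕ → ℂ} (hc : Good c) {R : ℝ} (hR : 0 < R) :
    Summable (fun n : ℕ => (n : ℝ) * (‖c n‖ * R ^ n)) := by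
  refine Summable.of_nonneg_of_le (fun n => by positivity) (fun n => ?_) (hc (2*R) (by positivity))
  have h1 : (n:ℝ) ≤ 2 ^ n := by
    exact_mod_cast (Nat.lt_two_pow_self (n := n)).le
  calc (n : ℝ) * (‖c n‖ * R ^ n) ≤ 2^n * (‖c n‖ * R ^ n) := by
        apply mul_le_mul_of_nonneg_right h1 (by positivity)
    _ = ‖c n‖ * (2*R) ^ n := by rw [mul_pow]; ring

lemma Good.shift {c : ℕ → ℂ} (hc : Good c) :
    Good (fun n => ((n:ℂ)+1) * c (n+1)) := by
  intro R hR
  have h2 : Summable (fun n : ℕ => ((n+1:ℕ) : ℝ) * (‖c (n+1)‖ * R ^ (n+1))) :=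
    ((hc.summable_n hR).comp_injective (add_left_injective 1))
  refine Summable.of_nonneg_of_le (fun n => by positivity) (fun n => ?_)
    (h2.mul_left R⁻¹)
  have : ‖((n:ℂ)+1) * c (n+1)‖ = ((n:ℝ)+1) * ‖c (n+1)‖ := by
    rw [norm_mul]
    congr 1
    rw [show ((n:ℂ)+1) = ((n+1 : ℕ) : ℂ) by push_cast; ring, Complex.norm_natCast]
    push_cast; ring
  rw [this]
  rw [pow_succ]
  push_cast
  rw [inv_mul_eq_div]
  rw [le_div_iff₀ hR]
  ring_nf
  exact le_refl _

lemma Good.summable_mul_pow {c : ℕ → ℂ} (hc : Good c) (z : ℂ) :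
    Summable (fun n => c n * z ^ n) := by
  refine Summable.of_norm_bounded (hc (‖z‖+1) (by positivity)) (fun n => ?_)
  rw [norm_mul, norm_pow]
  gcongr
  linarith




/-- term-by-term differentiation -/
lemma Good.hasDerivAt {c : ℕ → ℂ} (hc : Good c) (z : ℂ) :
    HasDerivAt (fun w => ∑' n, c n * w ^ n) (∑' n : ℕ, ((n:ℂ)+1) * c (n+1) * z ^ n) z := by
  set R : ℝ := ‖z‖ + 1 with hRdef
  have hR : 0 < R := by positivity
  set u : ℕ → ℝ := fun n => (n : ℝ) * (‖c n‖ * R ^ n) with hu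
  have hus : Summable u := hc.summable_n hR
  have hball : z ∈ Metric.ball (0:ℂ) R := by
    simp [hRdef]
  have hbound : ∀ (n : ℕ) (y : ℂ), y ∈ Metric.ball (0:ℂ) R →
      ‖c n * ((n:ℂ) * y ^ (n-1))‖ ≤ u n := by
    intro n y hy
    have hyR : ‖y‖ ≤ R := by
      rw [Metric.mem_ball, dist_zero_right] at hy; exact hy.le
    rw [norm_mul, norm_mul, norm_pow, Complex.norm_natCast]
    rcases n with _ | m
    · simp [hu]
    · have h1 : ‖y‖ ^ (m + 1 - 1) ≤ R ^ m := by
        simpa using pow_le_pow_left₀ (norm_nonneg y) hyR m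
      have h2 : R ^ m ≤ R ^ (m+1) := by
        nth_rewrite 1 [show R ^ m = R ^ m * 1 by ring]
        rw [pow_succ]
        gcongr
        linarith [norm_nonneg z]
      calc ‖c (m+1)‖ * (((m+1:ℕ):ℝ) * ‖y‖ ^ (m+1-1))
          ≤ ‖c (m+1)‖ * (((m+1:ℕ):ℝ) * R ^ (m+1)) := by
            gcongr
            exact h1.trans h2
        _ = u (m+1) := by rw [hu]; push_cast; ring
  have hderiv : ∀ (n : ℕ) (y : ℂ), y ∈ Metric.ball (0:ℂ) R →
      HasDerivAt (fun w => c n * w ^ n) (c n * ((n:ℂ) * y ^ (n-1))) y := by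
    intro n y _
    exact (hasDerivAt_pow n y).const_mul (c n)
  have h0 : Summable (fun n => c n * (0:ℂ) ^ n) := hc.summable_mul_pow 0
  have H := hasDerivAt_tsum_of_isPreconnected hus Metric.isOpen_ball
    (convex_ball (0:ℂ) R).isPreconnected hderiv hbound (Metric.mem_ball_self hR) h0 hball
  refine H.congr_deriv (Eq.symm ?_)
  have hsum : Summable (fun n => c n * ((n:ℂ) * z ^ (n-1))) :=
    Summable.of_norm_bounded hus (fun n => hbound n z hball)
  rw [Summable.tsum_eq_zero_add hsum]
  simp only [Nat.cast_zero, zero_mul, mul_zero, zero_add]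
  apply tsum_congr
  intro n
  push_cast
  ring

/-- shift a tsum -/
lemma tsum_shift (e : ℕ → ℂ) (z : ℂ)
    (hs : Summable (fun n : ℕ => (n:ℂ) * e n * z ^ n)) :
    ∑' n : ℕ, ((n:ℂ)+1) * e (n+1) * z ^ (n+1) = ∑' n : ℕ, (n:ℂ) * e n * z ^ n := by
  rw [Summable.tsum_eq_zero_add hs]
  simp only [Nat.cast_zero, zero_mul, zero_add]
  apply tsum_congr
  intro n
  push_cast
  ring




lemma Good.summable_nmul {c : ℕ → ℂ} (hc : Good c) (z : ℂ) :
    Summable (fun n : ℕ => (n:ℂ) * c n * z ^ n) := by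
  refine Summable.of_norm_bounded (hc.summable_n (R := ‖z‖ + 1) (by positivity)) (fun n => ?_)
  rw [norm_mul, norm_mul, norm_pow, Complex.norm_natCast, mul_assoc]
  have h1 : ‖z‖ ^ n ≤ (‖z‖ + 1) ^ n := by
    apply pow_le_pow_left₀ (norm_nonneg z)
    linarith
  have := mul_le_mul_of_nonneg_left h1 (norm_nonneg (c n))
  nlinarith [norm_nonneg (c n), pow_nonneg (norm_nonneg z) n, Nat.cast_nonneg (α := ℝ) n]

lemma ode {c : ℕ → ℂ} (u : ℂ) (v : ℝ) (hgood : Good c)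
    (hrec : ∀ n : ℕ, ((n:ℂ)+1) * ((v:ℂ)+n) * c (n+1) = (u + n) * c n) (z : ℂ) :
    z * (∑' n : ℕ, (((n:ℂ)+1) * (((n+1:ℕ):ℂ)+1) * c (n+2)) * z ^ n)
      + ((v:ℂ) - z) * (∑' n : ℕ, (((n:ℂ)+1) * c (n+1)) * z ^ n)
      - u * (∑' n : ℕ, c n * z ^ n) = 0 := by
  set A : ℕ → ℂ := fun n => ((n:ℂ)+1) * c (n+1) with hA
  have hgA : Good A := hgood.shift
  have step1 : z * (∑' n : ℕ, (((n:ℂ)+1) * (((n+1:ℕ):ℂ)+1) * c (n+2)) * z ^ n)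
      = ∑' n : ℕ, (n:ℂ) * A n * z ^ n := by
    rw [← tsum_mul_left, ← tsum_shift A z (hgA.summable_nmul z)]
    apply tsum_congr
    intro n
    rw [hA]
    push_cast
    ring
  have step2 : z * (∑' n : ℕ, A n * z ^ n) = ∑' n : ℕ, (n:ℂ) * c n * z ^ n := by
    rw [← tsum_mul_left, ← tsum_shift c z (hgood.summable_nmul z)]
    apply tsum_congr
    intro n
    rw [hA]
    push_cast
    ring
  have e1 : (∑' n : ℕ, (n:ℂ) * A n * z ^ n) + (v:ℂ) * (∑' n : ℕ, A n * z ^ n)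
      = ∑' n : ℕ, (u + n) * c n * z ^ n := by
    rw [← tsum_mul_left, ← Summable.tsum_add (hgA.summable_nmul z) ((hgA.summable_mul_pow z).mul_left _)]
    apply tsum_congr
    intro n
    rw [hA]
    linear_combination z ^ n * hrec n
  have e2 : (∑' n : ℕ, (n:ℂ) * c n * z ^ n) + u * (∑' n : ℕ, c n * z ^ n)
      = ∑' n : ℕ, (u + n) * c n * z ^ n := by
    rw [← tsum_mul_left, ← Summable.tsum_add (hgood.summable_nmul z) ((hgood.summable_mul_pow z).mul_left _)]
    apply tsum_congr
    intro n
    ring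
  have expand : ((v:ℂ) - z) * (∑' n : ℕ, A n * z ^ n)
      = (v:ℂ) * (∑' n : ℕ, A n * z ^ n) - z * (∑' n : ℕ, A n * z ^ n) := by ring
  rw [step1, expand, step2]
  linear_combination e1 - e2



/-- the Kummer coefficients -/
noncomputable def kc (u : ℂ) (v : ℝ) (n : ℕ) : ℂ :=
  (ascPochhammer ℂ n).eval u / ((ascPochhammer ℂ n).eval (v:ℂ) * (n.factorial : ℂ))

lemma pochhammer_real (v : ℝ) (n : ℕ) :
    (ascPochhammer ℂ n).eval (v:ℂ) = (((ascPochhammer ℝ n).eval v : ℝ) : ℂ) :=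
  (ascPochhammer_eval_hom Complex.ofRealHom n v).symm

lemma pochhammer_v_ne (v : ℝ) (hv : 0 < v) (n : ℕ) :
    (ascPochhammer ℂ n).eval (v:ℂ) ≠ 0 := by
  rw [pochhammer_real]
  exact_mod_cast (ascPochhammer_pos n v hv).ne'

lemma kc_zero (u : ℂ) (v : ℝ) : kc u v 0 = 1 := by
  simp [kc]

lemma kc_good (u : ℂ) (v : ℝ) (hv : 0 < v) : Good (kc u v) := by
  intro R hR
  refine Summable.of_nonneg_of_le (fun n => by positivity) (fun n => ?_)
    (summable_ratio (‖u‖+1) v R (by positivity) hv hR)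
  have h2 : (0:ℝ) < (ascPochhammer ℝ n).eval v := ascPochhammer_pos n v hv
  have h3 : (0:ℝ) < n.factorial := by exact_mod_cast n.factorial_pos
  have hnorm : ‖kc u v n‖
      = ‖(ascPochhammer ℂ n).eval u‖ / ((ascPochhammer ℝ n).eval v * n.factorial) := by
    rw [kc, norm_div, norm_mul, pochhammer_real]
    congr 2
    · rw [Complex.norm_real, Real.norm_eq_abs, abs_of_pos h2]
    · rw [Complex.norm_natCast]
  rw [hnorm]
  have hd : (0:ℝ) < (ascPochhammer ℝ n).eval v * n.factorial := by positivity
  gcongr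
  exact norm_ascPochhammer_le n u

lemma kc_rec (u : ℂ) (v : ℝ) (hv : 0 < v) (n : ℕ) :
    ((n:ℂ)+1) * ((v:ℂ)+n) * kc u v (n+1) = (u + n) * kc u v n := by
  have hvn : (ascPochhammer ℂ n).eval (v:ℂ) ≠ 0 := pochhammer_v_ne v hv n
  have hvn2 : ((v:ℂ) + n) ≠ 0 := by
    rw [show ((v:ℂ) + n) = (((v + n : ℝ)):ℂ) by push_cast; ring]
    exact_mod_cast (by positivity : (0:ℝ) < v + n).ne'
  have hfac : ((n.factorial : ℂ)) ≠ 0 := by exact_mod_cast n.factorial_ne_zero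
  have hn1 : ((n:ℂ)+1) ≠ 0 := by
    rw [show ((n:ℂ)+1) = (((n+1 : ℕ)):ℂ) by push_cast; ring]
    exact_mod_cast (n+1).succ_ne_zero -- wrong maybe
  rw [kc, kc, ascPochhammer_succ_eval, ascPochhammer_succ_eval, Nat.factorial_succ]
  push_cast
  field_simp

lemma kc_conj (u : ℂ) (v : ℝ) (n : ℕ) :
    (starRingEnd ℂ) (kc u v n) = kc ((starRingEnd ℂ) u) v n := by
  rw [kc, kc, map_div₀, map_mul, ascPochhammer_eval_hom (starRingEnd ℂ) n u]
  congr 2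
  · rw [ascPochhammer_eval_hom (starRingEnd ℂ) n, Complex.conj_ofReal]
  · simp



section funcs
variable (u : ℂ) (v : ℝ)

noncomputable def fK (t : ℝ) : ℂ := ∑' n : ℕ, kc u v n * ((t:ℂ)*I) ^ n
noncomputable def f1K (t : ℝ) : ℂ :=
  (∑' n : ℕ, ((n:ℂ)+1) * kc u v (n+1) * ((t:ℂ)*I) ^ n) * I
noncomputable def f2K (t : ℝ) : ℂ :=
  -(∑' n : ℕ, ((n:ℂ)+1) * (((n+1:ℕ):ℂ)+1) * kc u v (n+2) * ((t:ℂ)*I) ^ n)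

lemma hasDerivAt_line (t : ℝ) : HasDerivAt (fun s : ℝ => (s:ℂ)*I) I t := by
  simpa using (Complex.ofRealCLM.hasDerivAt (x := t)).mul_const I

variable (hv : 0 < v)
include hv

lemma hasDerivAt_fK (t : ℝ) : HasDerivAt (fK u v) (f1K u v t) t := by
  have h1 := ((kc_good u v hv).hasDerivAt ((t:ℂ)*I)).scomp t (hasDerivAt_line t)
  refine h1.congr_deriv (Eq.symm ?_)
  rw [smul_eq_mul, f1K]
  ring

lemma hasDerivAt_f1K (t : ℝ) : HasDerivAt (f1K u v) (f2K u v t) t := by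
  have hgA : Good (fun n => ((n:ℂ)+1) * kc u v (n+1)) := (kc_good u v hv).shift
  have h1 := ((hgA.hasDerivAt ((t:ℂ)*I)).scomp t (hasDerivAt_line t)).mul_const I
  refine h1.congr_deriv (Eq.symm ?_)
  rw [smul_eq_mul, f2K]
  have he : (∑' n : ℕ, ((n:ℂ)+1) * ((((n+1:ℕ):ℂ))+1) * kc u v (n+2) * ((t:ℂ)*I) ^ n)
      = ∑' n : ℕ, ((n:ℂ)+1) * ((fun m : ℕ => ((m:ℂ)+1) * kc u v (m+1)) (n+1)) * ((t:ℂ)*I) ^ n := by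
    apply tsum_congr; intro n; push_cast; ring
  rw [he]
  set Y := ∑' n : ℕ, ((n:ℂ)+1) * ((fun m : ℕ => ((m:ℂ)+1) * kc u v (m+1)) (n+1)) * ((t:ℂ)*I) ^ n
  linear_combination -Y * Complex.I_sq

lemma odeK (t : ℝ) :
    (t:ℂ) * f2K u v t
      = -(v:ℂ) * f1K u v t + I*(t:ℂ)*(f1K u v t) + I*u*(fK u v t) := by
  have h := ode u v (kc_good u v hv) (kc_rec u v hv) ((t:ℂ)*I)
  rw [fK, f1K, f2K]
  set X := ∑' n : ℕ, (((n:ℂ)+1) * kc u v (n+1)) * ((t:ℂ)*I) ^ n with hX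
  set Y := ∑' n : ℕ, (((n:ℂ)+1) * (((n+1:ℕ):ℂ)+1) * kc u v (n+2)) * ((t:ℂ)*I) ^ n with hY
  set Z := ∑' n : ℕ, kc u v n * ((t:ℂ)*I) ^ n with hZ
  linear_combination I * h - (t:ℂ) * Y * Complex.I_sq

lemma fK_zero : fK u v 0 = 1 := by
  rw [fK, tsum_eq_single 0 (fun b hb => by simp [zero_pow hb])]
  simp [kc_zero]

end funcs


section funcs
variable (u : ℂ) (v : ℝ)
noncomputable def NK (t : ℝ) : ℂ := fK u v t * (starRingEnd ℂ) (fK u v t)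
noncomputable def WK (t : ℝ) : ℂ :=
  fK u v t * (starRingEnd ℂ) (f1K u v t) - (starRingEnd ℂ) (fK u v t) * f1K u v t
noncomputable def HK (t : ℝ) : ℂ := ((t ^ v : ℝ) : ℂ) * (WK u v t + I * NK u v t)

lemma hasDerivAt_HK (hv : 0 < v) {t : ℝ} (ht : 0 < t) :
    HasDerivAt (HK u v)
      (I * ((v:ℂ) - 2*u.re) * ((t ^ (v-1) : ℝ) : ℂ) * NK u v t) t := by
  have hf := hasDerivAt_fK u v hv t
  have hf1 := hasDerivAt_f1K u v hv t
  have hcf : HasDerivAt (fun s => (starRingEnd ℂ) (fK u v s)) ((starRingEnd ℂ) (f1K u v t)) t :=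
    hf.star
  have hcf1 : HasDerivAt (fun s => (starRingEnd ℂ) (f1K u v s)) ((starRingEnd ℂ) (f2K u v t)) t :=
    hf1.star
  have hW : HasDerivAt (WK u v)
      (f1K u v t * (starRingEnd ℂ) (f1K u v t) + fK u v t * (starRingEnd ℂ) (f2K u v t)
        - ((starRingEnd ℂ) (f1K u v t) * f1K u v t + (starRingEnd ℂ) (fK u v t) * f2K u v t)) t :=
    (hf.mul hcf1).sub (hcf.mul hf1)
  have hN : HasDerivAt (NK u v)
      (f1K u v t * (starRingEnd ℂ) (fK u v t) + fK u v t * (starRingEnd ℂ) (f1K u v t)) t :=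
    hf.mul hcf
  have hrp : HasDerivAt (fun s : ℝ => ((s ^ v : ℝ) : ℂ)) ((v * t ^ (v-1) : ℝ) : ℂ) t :=
    (Real.hasDerivAt_rpow_const (Or.inl ht.ne')).ofReal_comp
  have hsum := hW.add (hN.const_mul I)
  have hH := hrp.mul hsum
  refine hH.congr_deriv (Eq.symm ?_)
  have hp : ((t ^ v : ℝ) : ℂ) = ((t ^ (v-1) : ℝ) : ℂ) * (t:ℂ) := by
    rw [show (t:ℝ) ^ v = t ^ (v-1) * t by
      rw [← Real.rpow_add_one ht.ne' (v-1)]; ring_nf]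
    push_cast
    ring
  have hcast : ((v * t ^ (v-1) : ℝ) : ℂ) = (v:ℂ) * ((t ^ (v-1) : ℝ) : ℂ) := by
    push_cast; ring
  rw [hp, hcast]
  have R1 := odeK u v hv t
  have R2 := congrArg (starRingEnd ℂ) R1
  simp only [map_mul, map_add, map_neg, Complex.conj_I, Complex.conj_ofReal] at R2
  have R3 : u + (starRingEnd ℂ) u = 2 * (u.re : ℂ) := by
    rw [Complex.add_conj]; push_cast; ring
  set p := ((t ^ (v-1) : ℝ) : ℂ)
  simp only [WK, NK, Pi.add_apply]
  linear_combination (p * (starRingEnd ℂ) (fK u v t)) * R1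
    - (p * fK u v t) * R2
    + I * p * fK u v t * (starRingEnd ℂ) (fK u v t) * R3

end funcs


lemma main (u : ℂ) (v : ℝ) (hv : 0 < v) (t₀ : ℝ) (ht₀ : 0 < t₀)
    (hzero : fK u v t₀ = 0) : u.re = v / 2 := by
  have hfd : Differentiable ℝ (fK u v) := fun t => (hasDerivAt_fK u v hv t).differentiableAt
  have hfc : Continuous (fK u v) := hfd.continuous
  have hf1d : Differentiable ℝ (f1K u v) := fun t => (hasDerivAt_f1K u v hv t).differentiableAt
  have hf1c : Continuous (f1K u v) := hf1d.continuous
  have hNc : Continuous (NK u v) := by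
    exact hfc.mul (Complex.continuous_conj.comp hfc)
  have hWc : Continuous (WK u v) :=
    (hfc.mul (Complex.continuous_conj.comp hf1c)).sub
      ((Complex.continuous_conj.comp hfc).mul hf1c)
  have hrpc : Continuous (fun t : ℝ => t ^ v) := by
    refine continuous_iff_continuousAt.mpr (fun x => ?_)
    exact Real.continuousAt_rpow_const x v (Or.inr hv.le)
  have hHc : Continuous (HK u v) :=
    (Complex.continuous_ofReal.comp hrpc).mul (hWc.add (continuous_const.mul hNc))
  -- FTC
  set cc : ℂ := I * ((v:ℂ) - 2*u.re) with hcc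
  set g : ℝ → ℂ := fun t => cc * ((t ^ (v-1) : ℝ) : ℂ) * NK u v t with hg
  have hint0 : IntervalIntegrable (fun t : ℝ => t ^ (v-1)) MeasureTheory.volume 0 t₀ :=
    intervalIntegrable_rpow' (by linarith)
  have hintC : IntervalIntegrable (fun t : ℝ => ((t ^ (v-1) : ℝ) : ℂ))
      MeasureTheory.volume 0 t₀ := by
    rw [intervalIntegrable_iff] at hint0 ⊢
    exact hint0.ofReal
  have hintg : IntervalIntegrable g MeasureTheory.volume 0 t₀ := by
    have : g = fun t => ((t ^ (v-1) : ℝ) : ℂ) * (cc * NK u v t) := by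
      funext t; rw [hg]; ring
    rw [this]
    exact hintC.mul_continuousOn ((continuous_const.mul hNc).continuousOn)
  have hderiv : ∀ x ∈ Ioo (0:ℝ) t₀, HasDerivWithinAt (HK u v) (g x) (Ioi x) x := by
    intro x hx
    exact (hasDerivAt_HK u v hv hx.1).hasDerivWithinAt
  have hFTC := integral_eq_sub_of_hasDeriv_right_of_le ht₀.le hHc.continuousOn hderiv hintg
  have hH0 : HK u v 0 = 0 := by
    simp [HK, Real.zero_rpow hv.ne']
  have hHt : HK u v t₀ = 0 := by
    simp [HK, WK, NK, hzero]
  rw [hH0, hHt, sub_zero] at hFTC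
  -- rewrite integral
  set r : ℝ → ℝ := fun t => t ^ (v-1) * Complex.normSq (fK u v t) with hr
  have hgr : ∀ t : ℝ, g t = cc * ((r t : ℝ) : ℂ) := by
    intro t
    simp only [hg, hr, NK, Complex.mul_conj]
    push_cast
    ring
  have hir : IntervalIntegrable r MeasureTheory.volume 0 t₀ :=
    hint0.mul_continuousOn ((Complex.continuous_normSq.comp hfc).continuousOn)
  have hIntEq : (∫ y in (0:ℝ)..t₀, g y) = cc * ((∫ y in (0:ℝ)..t₀, r y : ℝ) : ℂ) := by
    rw [show (fun y => g y) = fun y => cc * ((r y : ℝ) : ℂ) from funext hgr]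
    rw [integral_const_mul, intervalIntegral.integral_ofReal]
  rw [hIntEq] at hFTC
  -- positivity of the integral
  have hposint : 0 < ∫ y in (0:ℝ)..t₀, r y := by
    have hne : ∀ᶠ y in 𝓝 (0:ℝ), fK u v y ≠ 0 := by
      have h1 : fK u v 0 ≠ 0 := by rw [fK_zero u v hv]; exact one_ne_zero
      exact hfc.continuousAt.eventually_ne h1
    obtain ⟨δ, hδpos, hδ⟩ := Metric.eventually_nhds_iff.mp hne
    have hmem : ∀ x : ℝ, 0 ≤ x → x ≤ t₀ → x ∈ uIcc (0:ℝ) t₀ := fun x h1 h2 => by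
      rw [uIcc_of_le ht₀.le]; exact ⟨h1, h2⟩
    set δ' : ℝ := min (δ/2) t₀ with hδ'
    have hδ'pos : 0 < δ' := lt_min (by linarith) ht₀
    have hδ'le : δ' ≤ t₀ := min_le_right _ _
    have h1 : 0 < ∫ y in (0:ℝ)..δ', r y := by
      apply intervalIntegral_pos_of_pos_on
      · exact hir.mono_set (uIcc_subset_uIcc (hmem 0 le_rfl ht₀.le) (hmem δ' hδ'pos.le hδ'le))
      · intro x hx
        have hx1 : fK u v x ≠ 0 := by
          apply hδ
          rw [Real.dist_eq, sub_zero, abs_of_pos hx.1]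
          calc x < δ' := hx.2
          _ ≤ δ/2 := min_le_left _ _
          _ < δ := by linarith
        have : 0 < Complex.normSq (fK u v x) := Complex.normSq_pos.mpr hx1
        have hxp : 0 < x ^ (v-1) := Real.rpow_pos_of_pos hx.1 _
        rw [hr]
        positivity
      · exact hδ'pos
    have h2 : 0 ≤ ∫ y in δ'..t₀, r y := by
      apply integral_nonneg hδ'le
      intro x hx
      have hx0 : 0 < x := lt_of_lt_of_le hδ'pos hx.1
      have := Complex.normSq_nonneg (fK u v x)
      have hxp : 0 ≤ x ^ (v-1) := (Real.rpow_pos_of_pos hx0 _).le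
      rw [hr]
      positivity
    have hsplit : (∫ y in (0:ℝ)..δ', r y) + (∫ y in δ'..t₀, r y) = ∫ y in (0:ℝ)..t₀, r y := by
      apply integral_add_adjacent_intervals
      · exact hir.mono_set (uIcc_subset_uIcc (hmem 0 le_rfl ht₀.le) (hmem δ' hδ'pos.le hδ'le))
      · exact hir.mono_set (uIcc_subset_uIcc (hmem δ' hδ'pos.le hδ'le) (hmem t₀ ht₀.le le_rfl))
    linarith
  -- conclude
  have hccz : cc = 0 := by
    rcases mul_eq_zero.mp hFTC with h | h
    · exact h
    · exfalso
      exact hposint.ne' (by exact_mod_cast h)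
  rw [hcc] at hccz
  rcases mul_eq_zero.mp hccz with h | h
  · exact absurd h I_ne_zero
  · have h2 : (v:ℂ) = 2 * (u.re:ℂ) := sub_eq_zero.mp h
    have h3 : (v:ℂ) = ((2 * u.re : ℝ) : ℂ) := by rw [h2]; push_cast; ring
    have hvv : v = 2 * u.re := by exact_mod_cast h3
    linarith


lemma fK_conj (u : ℂ) (v : ℝ) (a : ℝ) :
    (starRingEnd ℂ) (fK u v a) = fK ((starRingEnd ℂ) u) v (-a) := by
  rw [fK, fK]
  rw [show ((starRingEnd ℂ) (∑' n : ℕ, kc u v n * ((a:ℂ)*I) ^ n))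
      = ∑' n : ℕ, (starRingEnd ℂ) (kc u v n * ((a:ℂ)*I) ^ n) from tsum_star]
  apply tsum_congr
  intro n
  rw [map_mul, map_pow, map_mul, Complex.conj_ofReal, Complex.conj_I, kc_conj]
  congr 2
  push_cast
  ring

lemma kummer_eq_fK (u : ℂ) (v : ℝ) (t : ℝ) : kummer u (v:ℂ) ((t:ℂ)*I) = fK u v t := rfl

end KummerProof

/-- If `₁F₁(u, v, z) = 0` with `v > 0` real and `z ≠ 0` purely imaginary,
then `Re u = v/2`. -/
theorem kummer_zero_re_eq_half (u : ℂ) (v : ℝ) (hv : 0 < v)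
    (z : ℂ) (hz : z.re = 0) (hz0 : z ≠ 0)
    (h : kummer u (v : ℂ) z = 0) :
    u.re = v / 2 := by

  have him : z.im ≠ 0 := by
    intro h0
    exact hz0 (Complex.ext_iff.mpr ⟨by simp [hz], by simp [h0]⟩)
  have hzz : z = (z.im : ℂ) * I := by
    apply Complex.ext <;> simp [hz]
  have hfz : KummerProof.fK u v z.im = 0 := by
    rw [← KummerProof.kummer_eq_fK, ← hzz]
    exact h
  rcases lt_or_gt_of_ne him with hneg | hpos
  · have h2 : KummerProof.fK ((starRingEnd ℂ) u) v (-z.im) = 0 := by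
      rw [← KummerProof.fK_conj, hfz, map_zero]
    have h3 := KummerProof.main ((starRingEnd ℂ) u) v hv (-z.im) (by linarith) h2
    simpa using h3
  · exact KummerProof.main u v hv z.im hpos hfz
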